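/- If g : ℝ^n → Cl_n is a left monogenic polynomial homogeneous of degree k and a ∈ Pin(n), then the function u ↦ ã g(a u ã) is again left monogenic and homogeneous of degree k; i.e., l_ã : M_k → M_k, f(u) ↦ ã f(a u ã), is a right-Cl_n-linear isomorphism. -/

import Mathlib

open scoped RealInnerProductSpace
noncomputable section

/-- The quadratic form `x ↦ -‖x‖²` on `ℝⁿ`. -/
def Qn (n : ℕ) : QuadraticForm ℝ (EuclideanSpace ℝ (Fin n)) :=
  -(LinearMap.BilinMap.toQuadraticMap (innerₗ (EuclideanSpace ℝ (Fin n))))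

/-- The Clifford algebra `Cl_n` generated from `ℝⁿ` by the relation `x² = -‖x‖²`. -/
abbrev Cl (n : ℕ) := CliffordAlgebra (Qn n)

/-- The canonical embedding `ℝⁿ ⊆ Cl_n`. -/
def ιn (n : ℕ) : EuclideanSpace ℝ (Fin n) →ₗ[ℝ] Cl n := CliffordAlgebra.ι (Qn n)

/-- Formal `Cl_n`-valued polynomials on `ℝⁿ`: finitely supported families of coefficients
indexed by multi-indices. -/
abbrev PolyC (n : ℕ) := (Fin n →₀ ℕ) →₀ Cl n

/-- Evaluation of a formal polynomial at `x ∈ ℝⁿ`. -/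
def evalP {n : ℕ} (p : PolyC n) (x : EuclideanSpace ℝ (Fin n)) : Cl n :=
  p.sum fun m c => (∏ i : Fin n, x i ^ m i) • c

/-- Formal partial derivative `∂/∂u_j`. -/
def pdP {n : ℕ} (j : Fin n) (p : PolyC n) : PolyC n :=
  p.sum fun m c => Finsupp.single (m - Finsupp.single j 1) (((m j : ℝ)) • c)

/-- The formal Dirac operator `D = Σ_j e_j ∂/∂u_j` on `Cl_n`-valued polynomials. -/
def diracP {n : ℕ} (p : PolyC n) : PolyC n :=
  ∑ j : Fin n,
    Finsupp.mapRange (fun c => ιn n (EuclideanSpace.single j 1) * c) (mul_zero _) (pdP j p)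

/-- A formal polynomial is homogeneous of degree `k`. -/
def IsHomogP {n : ℕ} (k : ℕ) (p : PolyC n) : Prop :=
  ∀ m ∈ p.support, (m.sum fun _ v => v) = k

/-- `Pin(n)`: the set of products of unit vectors of `ℝⁿ` inside `Cl_n`. -/
def IsPin (n : ℕ) (a : Cl n) : Prop :=
  ∃ l : List (EuclideanSpace ℝ (Fin n)),
    (∀ y ∈ l, ‖y‖ = 1) ∧ a = (l.map fun y => ιn n y).prod

/-- A function `ℝⁿ → Cl_n` is a left monogenic polynomial homogeneous of degree `k`
(an element of `M_k`). -/
def IsMonogenicPoly (n k : ℕ) (g : EuclideanSpace ℝ (Fin n) → Cl n) : Prop :=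
  ∃ p : PolyC n, g = evalP p ∧ diracP p = 0 ∧ IsHomogP k p
open MvPolynomial

namespace Stmt16

variable {n : ℕ}

def EE (n : ℕ) (j : Fin n) : EuclideanSpace ℝ (Fin n) := EuclideanSpace.single j 1

def smulPoly (q : MvPolynomial (Fin n) ℝ) (c : Cl n) : PolyC n :=
  Finsupp.onFinset q.support (fun m => MvPolynomial.coeff m q • c)
    (fun m h => MvPolynomial.mem_support_iff.2 fun h0 => h (show MvPolynomial.coeff m q • c = 0 by rw [h0, zero_smul]))

@[simp] lemma smulPoly_apply (q : MvPolynomial (Fin n) ℝ) (c : Cl n) (m : Fin n →₀ ℕ) :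
    smulPoly q c m = MvPolynomial.coeff m q • c := rfl

lemma smulPoly_monomial (m : Fin n →₀ ℕ) (r : ℝ) (c : Cl n) :
    smulPoly (monomial m r) c = Finsupp.single m (r • c) := by
  ext m'
  simp [coeff_monomial, Finsupp.single_apply, ite_smul]

lemma smulPoly_add_left (q q' : MvPolynomial (Fin n) ℝ) (c : Cl n) :
    smulPoly (q + q') c = smulPoly q c + smulPoly q' c := by
  ext m; simp [coeff_add, add_smul]

lemma smulPoly_add_right (q : MvPolynomial (Fin n) ℝ) (c c' : Cl n) :
    smulPoly q (c + c') = smulPoly q c + smulPoly q c' := by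
  ext m; simp [smul_add]

@[simp] lemma smulPoly_zero_right (q : MvPolynomial (Fin n) ℝ) :
    smulPoly q (0 : Cl n) = 0 := by
  ext m; simp

lemma smulPoly_C_mul (r : ℝ) (q : MvPolynomial (Fin n) ℝ) (c : Cl n) :
    smulPoly (C r * q) c = smulPoly q (r • c) := by
  ext m; rw [smulPoly_apply, smulPoly_apply, coeff_C_mul, mul_comm, mul_smul]

lemma smulPoly_smul_left (r : ℝ) (q : MvPolynomial (Fin n) ℝ) (c : Cl n) :
    smulPoly (r • q) c = r • smulPoly q c := by
  ext m; rw [smulPoly_apply, Finsupp.smul_apply, smulPoly_apply, coeff_smul, smul_assoc]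

lemma smulPoly_smul_right (r : ℝ) (q : MvPolynomial (Fin n) ℝ) (c : Cl n) :
    smulPoly q (r • c) = r • smulPoly q c := by
  ext m; rw [smulPoly_apply, Finsupp.smul_apply, smulPoly_apply, smul_comm]

lemma smulPoly_sum_left {α : Type*} (s : Finset α) (q : α → MvPolynomial (Fin n) ℝ) (c : Cl n) :
    smulPoly (∑ i ∈ s, q i) c = ∑ i ∈ s, smulPoly (q i) c := by
  classical
  induction s using Finset.induction_on with
  | empty => ext m; simp
  | insert _ _ hx ih => rw [Finset.sum_insert hx, Finset.sum_insert hx, smulPoly_add_left, ih]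

lemma smulPoly_sum_right {α : Type*} (s : Finset α) (q : MvPolynomial (Fin n) ℝ) (c : α → Cl n) :
    smulPoly q (∑ i ∈ s, c i) = ∑ i ∈ s, smulPoly q (c i) := by
  classical
  induction s using Finset.induction_on with
  | empty => simp
  | insert _ _ hx ih => rw [Finset.sum_insert hx, Finset.sum_insert hx, smulPoly_add_right, ih]

lemma mapRange_mul_smulPoly (d : Cl n) (q : MvPolynomial (Fin n) ℝ) (c : Cl n) :
    Finsupp.mapRange (fun x => d * x) (mul_zero d) (smulPoly q c) = smulPoly q (d * c) := by
  ext m; rw [Finsupp.mapRange_apply, smulPoly_apply, smulPoly_apply, mul_smul_comm]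

-- evalP lemmas
lemma evalP_zero (x : EuclideanSpace ℝ (Fin n)) : evalP (0 : PolyC n) x = 0 :=
  Finsupp.sum_zero_index

lemma evalP_single (m : Fin n →₀ ℕ) (c : Cl n) (x : EuclideanSpace ℝ (Fin n)) :
    evalP (Finsupp.single m c) x = (∏ i : Fin n, x i ^ m i) • c :=
  Finsupp.sum_single_index (smul_zero _)

lemma evalP_add (p p' : PolyC n) (x : EuclideanSpace ℝ (Fin n)) :
    evalP (p + p') x = evalP p x + evalP p' x :=
  Finsupp.sum_add_index (fun _ _ => smul_zero _) (fun _ _ b₁ b₂ => smul_add _ b₁ b₂)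

lemma evalP_smulPoly (q : MvPolynomial (Fin n) ℝ) (c : Cl n) (x : EuclideanSpace ℝ (Fin n)) :
    evalP (smulPoly q c) x = (aeval (fun i => x i) q) • c := by
  induction q using MvPolynomial.induction_on' with
  | monomial m r =>
    rw [smulPoly_monomial, evalP_single, aeval_monomial, Finsupp.prod_pow]
    simp only [Algebra.algebraMap_self, RingHom.id_apply]
    rw [mul_comm, mul_smul]
  | add p q hp hq =>
    rw [smulPoly_add_left, evalP_add, hp, hq, map_add, add_smul]

-- pdP lemmas
lemma pdP_zero (j : Fin n) : pdP j (0 : PolyC n) = 0 := Finsupp.sum_zero_index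

lemma pdP_single (j : Fin n) (m : Fin n →₀ ℕ) (c : Cl n) :
    pdP j (Finsupp.single m c)
      = Finsupp.single (m - Finsupp.single j 1) ((m j : ℝ) • c) :=
  Finsupp.sum_single_index (by rw [smul_zero, Finsupp.single_zero])

lemma pdP_add (j : Fin n) (p p' : PolyC n) : pdP j (p + p') = pdP j p + pdP j p' :=
  Finsupp.sum_add_index (fun _ _ => by rw [smul_zero, Finsupp.single_zero])
    (fun _ _ b₁ b₂ => by rw [smul_add, Finsupp.single_add])

lemma pdP_smulPoly (j : Fin n) (q : MvPolynomial (Fin n) ℝ) (c : Cl n) :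
    pdP j (smulPoly q c) = smulPoly (pderiv j q) c := by
  induction q using MvPolynomial.induction_on' with
  | monomial m r =>
    rw [smulPoly_monomial, pdP_single, pderiv_monomial, smulPoly_monomial]
    rw [smul_smul, mul_comm]
  | add p q hp hq =>
    rw [smulPoly_add_left, pdP_add, hp, hq, map_add, smulPoly_add_left]

-- diracP lemmas
lemma diracP_zero : diracP (0 : PolyC n) = 0 := by
  unfold diracP
  refine Finset.sum_eq_zero fun j _ => ?_
  rw [pdP_zero]
  ext m; simp

lemma diracP_add (p p' : PolyC n) : diracP (p + p') = diracP p + diracP p' := by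
  unfold diracP
  rw [← Finset.sum_add_distrib]
  refine Finset.sum_congr rfl fun j _ => ?_
  rw [pdP_add, Finsupp.mapRange_add (mul_add _)]

lemma diracP_single (m : Fin n →₀ ℕ) (c : Cl n) :
    diracP (Finsupp.single m c)
      = ∑ j : Fin n, Finsupp.single (m - Finsupp.single j 1)
          ((m j : ℝ) • (ιn n (EE n j) * c)) := by
  unfold diracP
  refine Finset.sum_congr rfl fun j _ => ?_
  rw [pdP_single, Finsupp.mapRange_single, mul_smul_comm]
  rfl

lemma diracP_smulPoly (q : MvPolynomial (Fin n) ℝ) (c : Cl n) :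
    diracP (smulPoly q c) = ∑ j : Fin n, smulPoly (pderiv j q) (ιn n (EE n j) * c) := by
  unfold diracP
  refine Finset.sum_congr rfl fun j _ => ?_
  rw [pdP_smulPoly, mapRange_mul_smulPoly]
  rfl

variable {n : ℕ}

def transf (f : Fin n → MvPolynomial (Fin n) ℝ) (b : Cl n) (p : PolyC n) : PolyC n :=
  p.sum fun m c => smulPoly (bind₁ f (monomial m (1:ℝ))) (b * c)

lemma transf_zero (f : Fin n → MvPolynomial (Fin n) ℝ) (b : Cl n) : transf f b 0 = 0 :=
  Finsupp.sum_zero_index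

lemma transf_single (f : Fin n → MvPolynomial (Fin n) ℝ) (b : Cl n) (m : Fin n →₀ ℕ)
    (c : Cl n) :
    transf f b (Finsupp.single m c) = smulPoly (bind₁ f (monomial m (1:ℝ))) (b * c) :=
  Finsupp.sum_single_index (by rw [mul_zero, smulPoly_zero_right])

lemma transf_add (f : Fin n → MvPolynomial (Fin n) ℝ) (b : Cl n) (p p' : PolyC n) :
    transf f b (p + p') = transf f b p + transf f b p' :=
  Finsupp.sum_add_index (fun _ _ => by rw [mul_zero, smulPoly_zero_right])
    (fun _ _ b₁ b₂ => by rw [mul_add, smulPoly_add_right])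

def transfHom (f : Fin n → MvPolynomial (Fin n) ℝ) (b : Cl n) : PolyC n →+ PolyC n where
  toFun := transf f b
  map_zero' := transf_zero f b
  map_add' := transf_add f b

lemma transf_sum {α : Type*} (f : Fin n → MvPolynomial (Fin n) ℝ) (b : Cl n)
    (s : Finset α) (g : α → PolyC n) :
    transf f b (∑ i ∈ s, g i) = ∑ i ∈ s, transf f b (g i) :=
  map_sum (transfHom f b) g s

lemma evalP_transf (f : Fin n → MvPolynomial (Fin n) ℝ) (b : Cl n) (p : PolyC n)
    (u x : EuclideanSpace ℝ (Fin n))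
    (hx : ∀ i, x i = aeval (fun j => u j) (f i)) :
    evalP (transf f b p) u = b * evalP p x := by
  induction p using Finsupp.induction with
  | zero => rw [transf_zero, evalP_zero, evalP_zero, mul_zero]
  | single_add m c p hmp hc ih =>
    rw [transf_add, evalP_add, evalP_add, mul_add, ih, transf_single, evalP_smulPoly,
      evalP_single, aeval_bind₁, aeval_monomial, Finsupp.prod_pow]
    simp only [Algebra.algebraMap_self, RingHom.id_apply, one_mul]
    rw [mul_smul_comm]
    have hprod : (∏ a : Fin n, (aeval fun j => u j) (f a) ^ m a) = ∏ i : Fin n, x i ^ m i :=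
      Finset.prod_congr rfl fun i _ => by rw [hx i]
    rw [hprod]

lemma isHomogP_transf {k : ℕ} (f : Fin n → MvPolynomial (Fin n) ℝ)
    (hf : ∀ i, (f i).IsHomogeneous 1) (b : Cl n) (p : PolyC n) (hp : IsHomogP k p) :
    IsHomogP k (transf f b p) := by
  intro m' hm'
  obtain ⟨m, hm, hm'2⟩ := Finset.mem_biUnion.1 (Finsupp.support_sum hm')
  have hco : MvPolynomial.coeff m' (bind₁ f (monomial m (1:ℝ))) ≠ 0 := by
    intro h0
    apply Finsupp.mem_support_iff.1 hm'2
    rw [smulPoly_apply, h0, zero_smul]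
  have hdeg : (bind₁ f (monomial m (1:ℝ))).IsHomogeneous (m.sum fun _ v => v) := by
    rw [bind₁_monomial]
    have h1 : (∏ i ∈ m.support, f i ^ m i).IsHomogeneous (∑ i ∈ m.support, 1 * m i) :=
      MvPolynomial.IsHomogeneous.prod _ _ _ fun i _ => (hf i).pow (m i)
    have h2 : (∑ i ∈ m.support, 1 * m i) = m.sum fun _ v => v := by
      simp [Finsupp.sum]
    rw [h2] at h1
    exact h1.C_mul 1
  have hw := hdeg hco
  have : (Finsupp.weight (1 : Fin n → ℕ)) m' = m'.sum fun _ v => v := by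
    rw [Finsupp.weight_apply]
    refine Finsupp.sum_congr fun i _ => ?_
    simp
  rw [this] at hw
  rw [hw]
  exact hp m hm

lemma pderiv_bind₁ (f : Fin n → MvPolynomial (Fin n) ℝ) (co : Fin n → Fin n → ℝ)
    (hf : ∀ i j, pderiv j (f i) = C (co i j)) (j : Fin n) (q : MvPolynomial (Fin n) ℝ) :
    pderiv j (bind₁ f q) = ∑ i : Fin n, C (co i j) * bind₁ f (pderiv i q) := by
  induction q using MvPolynomial.induction_on with
  | C r => simp
  | add p q hp hq =>
    simp only [map_add, hp, hq, mul_add, Finset.sum_add_distrib]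
  | mul_X p s hp =>
    have hps : ∀ i : Fin n, pderiv i (p * X s) = pderiv i p * X s + if s = i then p else 0 := by
      intro i
      rw [pderiv_mul]
      by_cases h : s = i
      · subst h; rw [pderiv_X_self, mul_one, if_pos rfl]
      · rw [pderiv_X_of_ne h, mul_zero, if_neg h]
    rw [map_mul, bind₁_X_right, pderiv_mul, hp, hf s j]
    simp only [hps, map_add, map_mul, bind₁_X_right, mul_add, Finset.sum_add_distrib]
    congr 1
    · rw [Finset.sum_mul]
      refine Finset.sum_congr rfl fun i _ => ?_
      rw [mul_assoc]
    · have : ∀ i : Fin n, C (co i j) * bind₁ f (if s = i then p else 0)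
          = if s = i then C (co i j) * bind₁ f p else 0 := by
        intro i
        by_cases h : s = i <;> simp [h]
      simp only [this, Finset.sum_ite_eq, Finset.mem_univ, if_true]
      rw [mul_comm]

lemma dirac_transf (f : Fin n → MvPolynomial (Fin n) ℝ) (co : Fin n → Fin n → ℝ)
    (hf : ∀ i j, pderiv j (f i) = C (co i j)) (b : Cl n) (ε : ℝ)
    (hkey : ∀ i, (∑ j : Fin n, co i j • ιn n (EE n j)) * b = ε • (b * ιn n (EE n i)))
    (p : PolyC n) : diracP (transf f b p) = ε • transf f b (diracP p) := by
  induction p using Finsupp.induction with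
  | zero => rw [transf_zero, diracP_zero, transf_zero, smul_zero]
  | single_add m c₀ p hmp hc ih =>
    rw [transf_add, diracP_add, diracP_add, transf_add, smul_add, ih]
    congr 1
    rw [transf_single, diracP_smulPoly, diracP_single]
    have hRHS : transf f b (∑ j : Fin n, Finsupp.single (m - Finsupp.single j 1)
        ((m j : ℝ) • (ιn n (EE n j) * c₀)))
        = ∑ i : Fin n, (m i : ℝ) • smulPoly (bind₁ f (monomial (m - Finsupp.single i 1) (1:ℝ)))
            (b * (ιn n (EE n i) * c₀)) := by
      rw [transf_sum]
      refine Finset.sum_congr rfl fun i _ => ?_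
      rw [transf_single, mul_smul_comm, smulPoly_smul_right]
    rw [hRHS]
    have hLHS : ∀ j : Fin n, smulPoly (pderiv j (bind₁ f (monomial m (1:ℝ))))
        (ιn n (EE n j) * (b * c₀))
        = ∑ i : Fin n, co i j • smulPoly (bind₁ f (pderiv i (monomial m (1:ℝ))))
            (ιn n (EE n j) * (b * c₀)) := by
      intro j
      rw [pderiv_bind₁ f co hf, smulPoly_sum_left]
      refine Finset.sum_congr rfl fun i _ => ?_
      rw [smulPoly_C_mul, smulPoly_smul_right]
    simp only [hLHS]
    rw [Finset.sum_comm]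
    have hstep : ∀ i : Fin n, (∑ j : Fin n, co i j • smulPoly
        (bind₁ f (pderiv i (monomial m (1:ℝ)))) (ιn n (EE n j) * (b * c₀)))
        = (m i : ℝ) • (ε • smulPoly (bind₁ f (monomial (m - Finsupp.single i 1) (1:ℝ)))
            (b * (ιn n (EE n i) * c₀))) := by
      intro i
      have h1 : (∑ j : Fin n, co i j • smulPoly
          (bind₁ f (pderiv i (monomial m (1:ℝ)))) (ιn n (EE n j) * (b * c₀)))
          = smulPoly (bind₁ f (pderiv i (monomial m (1:ℝ))))
              ((∑ j : Fin n, co i j • ιn n (EE n j)) * (b * c₀)) := by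
        rw [Finset.sum_mul, smulPoly_sum_right]
        refine Finset.sum_congr rfl fun j _ => ?_
        rw [smul_mul_assoc, smulPoly_smul_right]
      rw [h1, ← mul_assoc, hkey i, smul_mul_assoc, mul_assoc, smulPoly_smul_right]
      have h2 : bind₁ f (pderiv i (monomial m (1:ℝ)))
          = (m i : ℝ) • bind₁ f (monomial (m - Finsupp.single i 1) (1:ℝ)) := by
        rw [pderiv_monomial, one_mul, ← map_smul, smul_monomial, smul_eq_mul, mul_one]
      rw [h2, smulPoly_smul_left, smul_comm]
    simp only [hstep]
    rw [Finset.smul_sum]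
    refine Finset.sum_congr rfl fun i _ => ?_
    rw [smul_comm]
variable {n : ℕ}

lemma inner_EE (v : EuclideanSpace ℝ (Fin n)) (j : Fin n) : ⟪EE n j, v⟫ = v j := by
  rw [EE, EuclideanSpace.inner_single_left]
  simp

lemma apply_eq_inner (v : EuclideanSpace ℝ (Fin n)) (j : Fin n) : v j = ⟪EE n j, v⟫ :=
  (inner_EE v j).symm

lemma symm_apply_coord (O : EuclideanSpace ℝ (Fin n) ≃ₗᵢ[ℝ] EuclideanSpace ℝ (Fin n))
    (i j : Fin n) : (O.symm (EE n i)) j = (O (EE n j)) i := by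
  rw [apply_eq_inner (O.symm (EE n i)) j, ← O.inner_map_map (EE n j) (O.symm (EE n i)),
    O.apply_symm_apply, real_inner_comm, inner_EE]

lemma sum_coord_smul (O : EuclideanSpace ℝ (Fin n) ≃ₗᵢ[ℝ] EuclideanSpace ℝ (Fin n))
    (i : Fin n) : (∑ j : Fin n, (O (EE n j)) i • EE n j) = O.symm (EE n i) := by
  ext j₀
  have h1 : (∑ j : Fin n, (O (EE n j)) i • EE n j) j₀
      = ∑ j : Fin n, (O (EE n j)) i • (EE n j) j₀ := by
    simp only [WithLp.ofLp_sum, WithLp.ofLp_smul, Finset.sum_apply, Pi.smul_apply]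
  rw [h1, symm_apply_coord]
  simp only [EE, EuclideanSpace.single_apply, smul_eq_mul, mul_ite, mul_one, mul_zero,
    Finset.sum_ite_eq, Finset.mem_univ, if_true]

lemma main {k : ℕ} (b : Cl n) (O : EuclideanSpace ℝ (Fin n) ≃ₗᵢ[ℝ] EuclideanSpace ℝ (Fin n))
    (ε : ℝ)
    (hkey : ∀ i, ιn n (O.symm (EE n i)) * b = ε • (b * ιn n (EE n i)))
    (g : EuclideanSpace ℝ (Fin n) → Cl n) (hg : IsMonogenicPoly n k g) :
    IsMonogenicPoly n k (fun u => b * g (O u)) := by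
  obtain ⟨p, rfl, hd, hh⟩ := hg
  set co : Fin n → Fin n → ℝ := fun i j => (O (EE n j)) i with hco
  set f : Fin n → MvPolynomial (Fin n) ℝ := fun i => ∑ j : Fin n, C (co i j) * X j with hfdef
  have hf : ∀ i j, pderiv j (f i) = C (co i j) := by
    intro i j
    rw [hfdef]
    simp only [map_sum, pderiv_C_mul]
    have : ∀ j' : Fin n, C (co i j') * pderiv j (X j')
        = if j' = j then C (co i j') else 0 := by
      intro j'
      by_cases h : j' = j
      · subst h; rw [pderiv_X_self, mul_one, if_pos rfl]
      · rw [pderiv_X_of_ne h, mul_zero, if_neg h]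
    simp only [this]
    rw [Finset.sum_ite_eq' Finset.univ j (fun j' => C (co i j'))]
    simp
  have hf1 : ∀ i, (f i).IsHomogeneous 1 := by
    intro i
    rw [hfdef]
    exact MvPolynomial.IsHomogeneous.sum _ _ _ fun j _ =>
      (isHomogeneous_X ℝ j).C_mul (co i j)
  have hkey' : ∀ i, (∑ j : Fin n, co i j • ιn n (EE n j)) * b = ε • (b * ιn n (EE n i)) := by
    intro i
    have : (∑ j : Fin n, co i j • ιn n (EE n j)) = ιn n (O.symm (EE n i)) := by
      rw [← sum_coord_smul O i, map_sum]
      exact Finset.sum_congr rfl fun j _ => by rw [map_smul]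
    rw [this, hkey i]
  refine ⟨transf f b p, ?_, ?_, ?_⟩
  · funext u
    refine (evalP_transf f b p u (O u) ?_).symm
    intro i
    rw [hfdef]
    simp only [map_sum, map_mul, aeval_C, aeval_X, Algebra.algebraMap_self, RingHom.id_apply]
    have hiu : ⟪EE n i, O u⟫ = ⟪O.symm (EE n i), u⟫ := by
      rw [← O.inner_map_map (O.symm (EE n i)) u, O.apply_symm_apply]
    rw [apply_eq_inner (O u) i, hiu, ← sum_coord_smul O i, sum_inner]
    refine Finset.sum_congr rfl fun j _ => ?_
    rw [real_inner_smul_left, inner_EE]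
  · rw [dirac_transf f co hf b ε hkey', hd, transf_zero, smul_zero]
  · exact isHomogP_transf f hf1 b p hh

lemma Qn_unit (y : EuclideanSpace ℝ (Fin n)) (hy : ‖y‖ = 1) : Qn n y = -1 := by
  have h : Qn n y = -(⟪y, y⟫) := by
    rw [Qn, QuadraticMap.neg_apply, LinearMap.BilinMap.toQuadraticMap_apply]
    rfl
  rw [h, real_inner_self_eq_norm_sq, hy]
  norm_num

lemma pin_eps (a : Cl n) (ha : IsPin n a) :
    ∃ ε : ℝ, ε * ε = 1 ∧ a * CliffordAlgebra.reverse a = algebraMap ℝ (Cl n) ε ∧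
      CliffordAlgebra.reverse a * a = algebraMap ℝ (Cl n) ε := by
  obtain ⟨l, hl, rfl⟩ := ha
  induction l with
  | nil =>
    refine ⟨1, one_mul 1, ?_, ?_⟩ <;>
      simp [CliffordAlgebra.reverse.map_one]
  | cons y t ih =>
    have hy : ‖y‖ = 1 := hl y List.mem_cons_self
    obtain ⟨ε, hε, h1, h2⟩ := ih fun z hz => hl z (List.mem_cons_of_mem y hz)
    have hry : CliffordAlgebra.reverse (ιn n y) = ιn n y := CliffordAlgebra.reverse_ι y
    have hsq : ιn n y * ιn n y = algebraMap ℝ (Cl n) (-1) := by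
      rw [show ιn n y = CliffordAlgebra.ι (Qn n) y from rfl, CliffordAlgebra.ι_sq_scalar,
        Qn_unit y hy]
    set P := (List.map (fun y => ιn n y) t).prod with hP
    refine ⟨-ε, by rw [neg_mul_neg, hε], ?_, ?_⟩
    · rw [List.map_cons, List.prod_cons, CliffordAlgebra.reverse.map_mul, hry, ← hP]
      calc ιn n y * P * (CliffordAlgebra.reverse P * ιn n y)
          = ιn n y * (P * CliffordAlgebra.reverse P) * ιn n y := by noncomm_ring
        _ = ιn n y * algebraMap ℝ (Cl n) ε * ιn n y := by rw [h1]
        _ = algebraMap ℝ (Cl n) ε * (ιn n y * ιn n y) := by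
            rw [← Algebra.commutes ε (ιn n y), mul_assoc]
        _ = algebraMap ℝ (Cl n) (-ε) := by
            rw [hsq, ← map_mul]
            norm_num
    · rw [List.map_cons, List.prod_cons, CliffordAlgebra.reverse.map_mul, hry, ← hP]
      calc CliffordAlgebra.reverse P * ιn n y * (ιn n y * P)
          = CliffordAlgebra.reverse P * (ιn n y * ιn n y) * P := by noncomm_ring
        _ = CliffordAlgebra.reverse P * algebraMap ℝ (Cl n) (-1) * P := by rw [hsq]
        _ = algebraMap ℝ (Cl n) (-1) * (CliffordAlgebra.reverse P * P) := by
            rw [← Algebra.commutes (-1 : ℝ) (CliffordAlgebra.reverse P), mul_assoc]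
        _ = algebraMap ℝ (Cl n) (-ε) := by
            rw [h2, ← map_mul]
            norm_num

end Stmt16

/-- If `g ∈ M_k` and `a ∈ Pin(n)` (with associated rotation `O`, `a (ι u) ã = ι (O u)`),
then `u ↦ ã g(a u ã)` is again a left monogenic polynomial homogeneous of degree `k`;
moreover `l_ã : M_k → M_k` is a right-`Cl_n`-linear bijection. -/
theorem stmt16 (n k : ℕ) (a : Cl n) (ha : IsPin n a)
    (O : EuclideanSpace ℝ (Fin n) ≃ₗᵢ[ℝ] EuclideanSpace ℝ (Fin n))
    (hO : ∀ w, a * ιn n w * CliffordAlgebra.reverse a = ιn n (O w)) :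
    (∀ g : EuclideanSpace ℝ (Fin n) → Cl n, IsMonogenicPoly n k g →
      IsMonogenicPoly n k (fun u => CliffordAlgebra.reverse a * g (O u))) ∧
    (∀ h : EuclideanSpace ℝ (Fin n) → Cl n, IsMonogenicPoly n k h →
      ∃! g : EuclideanSpace ℝ (Fin n) → Cl n,
        IsMonogenicPoly n k g ∧
          ∀ u, h u = CliffordAlgebra.reverse a * g (O u)) ∧
    (∀ g : EuclideanSpace ℝ (Fin n) → Cl n, ∀ c : Cl n,
      (fun u => CliffordAlgebra.reverse a * (g (O u) * c))
        = fun u => (CliffordAlgebra.reverse a * g (O u)) * c) := by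
  obtain ⟨ε, hε, haR, hRa⟩ := Stmt16.pin_eps a ha
  have hkey1 : ∀ i, ιn n (O.symm (Stmt16.EE n i)) * CliffordAlgebra.reverse a
      = ε • (CliffordAlgebra.reverse a * ιn n (Stmt16.EE n i)) := by
    intro i
    have h := hO (O.symm (Stmt16.EE n i))
    rw [O.apply_symm_apply] at h
    have h2 : CliffordAlgebra.reverse a * ιn n (Stmt16.EE n i)
        = ε • (ιn n (O.symm (Stmt16.EE n i)) * CliffordAlgebra.reverse a) := by
      rw [← h, ← mul_assoc, ← mul_assoc, hRa, ← Algebra.smul_def, smul_mul_assoc]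
    rw [h2, smul_smul, hε, one_smul]
  have hkey2 : ∀ i, ιn n (O (Stmt16.EE n i)) * a = ε • (a * ιn n (Stmt16.EE n i)) := by
    intro i
    have h := hO (Stmt16.EE n i)
    rw [← h, mul_assoc, hRa, ← Algebra.commutes ε (a * ιn n (Stmt16.EE n i)),
      ← Algebra.smul_def]
  refine ⟨?_, ?_, ?_⟩
  · intro g hg
    exact Stmt16.main (CliffordAlgebra.reverse a) O ε hkey1 g hg
  · intro h hh
    have hkey3 : ∀ i, ιn n (O.symm.symm (Stmt16.EE n i)) * (ε • a)
        = ε • ((ε • a) * ιn n (Stmt16.EE n i)) := by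
      intro i
      rw [LinearIsometryEquiv.symm_symm, mul_smul_comm, hkey2 i, smul_mul_assoc]
    refine ⟨fun u => (ε • a) * h (O.symm u),
      ⟨Stmt16.main (ε • a) O.symm ε hkey3 h hh, ?_⟩, ?_⟩
    · intro u
      show h u = CliffordAlgebra.reverse a * ((ε • a) * h (O.symm (O u)))
      rw [O.symm_apply_apply, smul_mul_assoc, mul_smul_comm, ← mul_assoc, hRa,
        ← Algebra.smul_def, smul_smul, hε, one_smul]
    · rintro g' ⟨_, hg'eq⟩
      funext v
      have hv := hg'eq (O.symm v)
      rw [O.apply_symm_apply] at hv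
      have h1 : (ε • a) * CliffordAlgebra.reverse a = 1 := by
        rw [smul_mul_assoc, haR, Algebra.smul_def, ← map_mul, hε, map_one]
      calc g' v = 1 * g' v := (one_mul _).symm
        _ = ((ε • a) * CliffordAlgebra.reverse a) * g' v := by rw [h1]
        _ = (ε • a) * (CliffordAlgebra.reverse a * g' v) := mul_assoc _ _ _
        _ = (ε • a) * h (O.symm v) := by rw [← hv]
  · intro g c
    funext u
    exact (mul_assoc _ _ _).symm
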